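/- Under within-type exchangeability, for every type i ∈ {1,…,L}, every t ≥ 0 and every δ > 0: Σ_{r=1}^{n_i} P( T > t and t < T^{(i)}_r ≤ t+δ ) = n_i Σ_{m} Φ(m_1,…,m_{i−1}, m_i+1, m_{i+1},…,m_L) · (∏_{l≠i} C(n_l, m_l)) · C(n_i−1, m_i) · A_m^{(i)}(t,δ), where the sum is over all count vectors m with 0 ≤ m_l ≤ n_l for l ≠ i and 0 ≤ m_i ≤ n_i−1, and A_m^{(i)}(t,δ) := P( for each l ≠ i: T^{(l)}_j > t for 1 ≤ j ≤ m_l and T^{(l)}_j ≤ t for m_l < j ≤ n_l; and for type i: t < T^{(i)}_1 ≤ t+δ, T^{(i)}_j > t for 2 ≤ j ≤ m_i+1, and T^{(i)}_j ≤ t for m_i+1 < j ≤ n_i ). -/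

import Mathlib

open MeasureTheory Finset

noncomputable def survSig {L : ℕ} (n : Fin L → ℕ)
    (φ : ((l : Fin L) → Fin (n l) → Bool) → Bool) (c : Fin L → ℕ) : ℝ :=
  (∑ x : (l : Fin L) → Fin (n l) → Bool,
      if (∀ l, (Finset.univ.filter fun j => x l j = true).card = c l) ∧ φ x = true
      then (1 : ℝ) else 0)
    / ∏ l, (Nat.choose (n l) (c l) : ℝ)



lemma exists_perm {N : ℕ} (c : ℕ) (s : Finset (Fin N)) (h : s.card = c) :
    ∃ σ : Equiv.Perm (Fin N), ∀ j, σ j ∈ s ↔ (j : ℕ) < c := by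
  classical
  have hcN : c ≤ N := by
    have := s.card_le_univ
    simpa [h] using this
  have hq : Fintype.card {a : Fin N // (a : ℕ) < c} = c := by
    have e : {a : Fin N // (a : ℕ) < c} ≃ Fin c :=
      ⟨fun a => ⟨(a : Fin N), a.2⟩, fun j => ⟨Fin.castLE hcN j, j.isLt⟩,
        fun a => by ext; simp, fun j => by ext; simp⟩
    simp [Fintype.card_congr e]
  have hp : Fintype.card {a : Fin N // a ∈ s} = c := by
    simpa using (Fintype.card_coe s).trans h
  have hq' : Fintype.card {a : Fin N // ¬ (a : ℕ) < c} = N - c := by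
    have := Fintype.card_subtype_compl (fun a : Fin N => (a : ℕ) < c)
    rw [hq] at this; simpa using this
  have hp' : Fintype.card {a : Fin N // ¬ a ∈ s} = N - c := by
    have := Fintype.card_subtype_compl (fun a : Fin N => a ∈ s)
    rw [hp] at this; simpa using this
  let e₁ : {a : Fin N // (a : ℕ) < c} ≃ {a : Fin N // a ∈ s} :=
    Fintype.equivOfCardEq (by rw [hq, hp])
  let e₂ : {a : Fin N // ¬ (a : ℕ) < c} ≃ {a : Fin N // ¬ a ∈ s} :=
    Fintype.equivOfCardEq (by rw [hq', hp'])
  refine ⟨Equiv.subtypeCongr e₁ e₂, ?_⟩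
  intro j
  by_cases hj : (j : ℕ) < c
  · simp only [Equiv.subtypeCongr, Equiv.trans_apply,
      Equiv.sumCompl_symm_apply_of_pos hj, Equiv.sumCongr_apply, Sum.map_inl,
      Equiv.sumCompl_apply_inl]
    simpa [hj] using (e₁ ⟨j, hj⟩).2
  · simp only [Equiv.subtypeCongr, Equiv.trans_apply,
      Equiv.sumCompl_symm_apply_of_neg hj, Equiv.sumCongr_apply, Sum.map_inr,
      Equiv.sumCompl_apply_inr]
    simpa [hj] using (e₂ ⟨j, hj⟩).2

lemma exists_perm' {N : ℕ} (c : ℕ) (s : Finset (Fin N)) (h : s.card = c + 1)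
    (r : Fin N) (hr : r ∈ s) (h0 : 0 < N) :
    ∃ σ : Equiv.Perm (Fin N), σ ⟨0, h0⟩ = r ∧ ∀ j, σ j ∈ s ↔ (j : ℕ) < c + 1 := by
  obtain ⟨τ, hτ⟩ := exists_perm (c + 1) s h
  have hτ0 : τ ⟨0, h0⟩ ∈ s := (hτ _).2 (Nat.succ_pos c)
  refine ⟨τ.trans (Equiv.swap (τ ⟨0, h0⟩) r), by simp, ?_⟩
  intro j
  have : Equiv.swap (τ ⟨0, h0⟩) r (τ j) ∈ s ↔ τ j ∈ s := by
    rcases eq_or_ne (τ j) (τ ⟨0, h0⟩) with h1 | h1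
    · rw [h1, Equiv.swap_apply_left]; simp [hr, hτ0]
    · rcases eq_or_ne (τ j) r with h2 | h2
      · rw [h2, Equiv.swap_apply_right]; simp [hr, hτ0]
      · rw [Equiv.swap_apply_of_ne_of_ne h1 h2]
  simpa [this] using hτ j

/-- number of working components of type `l` -/
def cntAux {L : ℕ} {n : Fin L → ℕ} (x : (l : Fin L) → Fin (n l) → Bool) (l : Fin L) : ℕ :=
  (Finset.univ.filter fun j => x l j = true).card

lemma cntAux_le {L : ℕ} {n : Fin L → ℕ} (x : (l : Fin L) → Fin (n l) → Bool) (l : Fin L) :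
    cntAux x l ≤ n l := by
  simpa [cntAux] using (Finset.card_filter_le Finset.univ fun j => x l j = true)

/-- count vector of `x` with type `i` decremented -/
def keyAux {L : ℕ} (n : Fin L → ℕ) (i : Fin L) (x : (l : Fin L) → Fin (n l) → Bool)
    (l : Fin L) : Fin ((if l = i then n i - 1 else n l) + 1) :=
  ⟨if l = i then cntAux x i - 1 else cntAux x l, by
    split_ifs with h
    · have := cntAux_le x i; omega
    · have := cntAux_le x l; omega⟩

/-- the event `Ev x r`: state at time t equals x, and component r of type i fails by t+δ -/
def EvSet {Ω : Type*} {L : ℕ} {n : Fin L → ℕ} (T : (l : Fin L) → Fin (n l) → Ω → ℝ)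
    (i : Fin L) (t δ : ℝ) (x : (l : Fin L) → Fin (n l) → Bool) (r : Fin (n i)) : Set Ω :=
  {ω | (∀ l j, (t < T l j ω ↔ x l j = true)) ∧ T i r ω ≤ t + δ}

/-- the ordered-configuration event `A_m` -/
def ASet {Ω : Type*} {L : ℕ} {n : Fin L → ℕ} (T : (l : Fin L) → Fin (n l) → Ω → ℝ)
    (i : Fin L) (t δ : ℝ)
    (m : (l : Fin L) → Fin ((if l = i then n i - 1 else n l) + 1)) : Set Ω :=
  {ω | (∀ l, l ≠ i → ∀ j : Fin (n l),
        ((j : ℕ) < (m l : ℕ) → t < T l j ω) ∧ ((m l : ℕ) ≤ (j : ℕ) → T l j ω ≤ t))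
    ∧ (∀ j : Fin (n i),
        ((j : ℕ) = 0 → t < T i j ω ∧ T i j ω ≤ t + δ)
        ∧ (1 ≤ (j : ℕ) ∧ (j : ℕ) ≤ (m i : ℕ) → t < T i j ω)
        ∧ ((m i : ℕ) + 1 ≤ (j : ℕ) → T i j ω ≤ t))}

lemma EvSet_measurable {Ω : Type*} [MeasurableSpace Ω] {L : ℕ} {n : Fin L → ℕ}
    (T : (l : Fin L) → Fin (n l) → Ω → ℝ) (hTmeas : ∀ l j, Measurable (T l j))
    (i : Fin L) (t δ : ℝ) (x : (l : Fin L) → Fin (n l) → Bool) (r : Fin (n i)) :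
    MeasurableSet (EvSet T i t δ x r) := by
  have h1 : ∀ l j, MeasurableSet {ω : Ω | t < T l j ω} :=
    fun l j => measurableSet_lt measurable_const (hTmeas l j)
  have : EvSet T i t δ x r =
      (⋂ l, ⋂ j, {ω : Ω | t < T l j ω ↔ x l j = true}) ∩ {ω | T i r ω ≤ t + δ} := by
    ext ω; simp only [EvSet, Set.mem_setOf_eq, Set.mem_inter_iff, Set.mem_iInter]
  rw [this]
  refine MeasurableSet.inter (MeasurableSet.iInter fun l => MeasurableSet.iInter fun j => ?_)
    (measurableSet_le (hTmeas i r) measurable_const)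
  by_cases hx : x l j = true
  · simp only [hx, iff_true]; exact h1 l j
  · have : {ω : Ω | t < T l j ω ↔ x l j = true} = {ω : Ω | t < T l j ω}ᶜ := by
      ext ω; simp [hx]
    rw [this]; exact (h1 l j).compl

lemma step1 {Ω : Type*} [MeasurableSpace Ω] (P : Measure Ω)
    {L : ℕ} {n : Fin L → ℕ} (T : (l : Fin L) → Fin (n l) → Ω → ℝ)
    (hTmeas : ∀ l j, Measurable (T l j))
    (φ : ((l : Fin L) → Fin (n l) → Bool) → Bool)
    (Tsys : Ω → ℝ) (t' : ℝ)
    (hT : {ω | t' < Tsys ω} = {ω | φ (fun l j => decide (t' < T l j ω)) = true})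
    (i : Fin L) (δ : ℝ) (r : Fin (n i)) :
    P {ω | t' < Tsys ω ∧ t' < T i r ω ∧ T i r ω ≤ t' + δ}
      = ∑ x : (l : Fin L) → Fin (n l) → Bool,
          (if φ x = true ∧ x i r = true then P (EvSet T i t' δ x r) else 0) := by
  classical
  have hE : {ω | t' < Tsys ω ∧ t' < T i r ω ∧ T i r ω ≤ t' + δ}
      = ⋃ x : (l : Fin L) → Fin (n l) → Bool,
          (if φ x = true ∧ x i r = true then EvSet T i t' δ x r else ∅) := by
    ext ω
    simp only [Set.mem_setOf_eq, Set.mem_iUnion]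
    constructor
    · rintro ⟨hsys, hr1, hr2⟩
      have hφω : φ (fun l j => decide (t' < T l j ω)) = true := by
        have h2 : ω ∈ {ω | t' < Tsys ω} := hsys
        rw [hT] at h2; exact h2
      refine ⟨fun l j => decide (t' < T l j ω), ?_⟩
      rw [if_pos ⟨hφω, by simpa using hr1⟩]
      exact ⟨fun l j => by simp, hr2⟩
    · rintro ⟨x, hx⟩
      by_cases hc : φ x = true ∧ x i r = true
      · rw [if_pos hc] at hx
        obtain ⟨hstate, hr2⟩ := hx
        have hxeq : (fun l j => decide (t' < T l j ω)) = x := by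
          funext l j
          by_cases h : t' < T l j ω
          · simp [h, (hstate l j).1 h]
          · simp only [h, decide_false]
            by_contra hne
            exact h ((hstate l j).2 (by revert hne; cases x l j <;> simp))
        refine ⟨?_, (hstate i r).2 hc.2, hr2⟩
        have h3 : ω ∈ {ω | φ (fun l j => decide (t' < T l j ω)) = true} := by
          rw [Set.mem_setOf_eq, hxeq]; exact hc.1
        rw [← hT] at h3; exact h3
      · rw [if_neg hc] at hx; exact absurd hx (Set.notMem_empty ω)
  have hdisj : Pairwise (Function.onFun Disjoint
      (fun x : (l : Fin L) → Fin (n l) → Bool =>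
        if φ x = true ∧ x i r = true then EvSet T i t' δ x r else ∅)) := by
    intro x y hxy
    simp only [Function.onFun]
    refine Set.disjoint_left.2 fun ω hωx hωy => hxy ?_
    by_cases hcx : φ x = true ∧ x i r = true
    · by_cases hcy : φ y = true ∧ y i r = true
      · rw [if_pos hcx] at hωx; rw [if_pos hcy] at hωy
        funext l j
        have h1 := (hωx.1 l j); have h2 := (hωy.1 l j)
        by_cases h : t' < T l j ω
        · rw [h1.1 h, h2.1 h]
        · cases hxl : x l j <;> cases hyl : y l j
          · rfl
          · exact absurd (h2.2 hyl) h
          · exact absurd (h1.2 hxl) h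
          · rfl
      · rw [if_neg hcy] at hωy; exact absurd hωy (Set.notMem_empty ω)
    · rw [if_neg hcx] at hωx; exact absurd hωx (Set.notMem_empty ω)
  have hmeas : ∀ x : (l : Fin L) → Fin (n l) → Bool,
      MeasurableSet (if φ x = true ∧ x i r = true then EvSet T i t' δ x r else ∅) := by
    intro x
    by_cases hc : φ x = true ∧ x i r = true
    · rw [if_pos hc]; exact EvSet_measurable T hTmeas i t' δ x r
    · rw [if_neg hc]; exact MeasurableSet.empty
  rw [hE, measure_iUnion hdisj hmeas, tsum_fintype]
  refine Finset.sum_congr rfl fun x _ => ?_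
  by_cases hc : φ x = true ∧ x i r = true
  · rw [if_pos hc, if_pos hc]
  · rw [if_neg hc, if_neg hc, measure_empty]

lemma measurableSet_imp {α : Type*} [MeasurableSpace α] (c : Prop) [Decidable c] (S : Set α)
    (hS : MeasurableSet S) : MeasurableSet {a | c → a ∈ S} := by
  by_cases hc : c
  · have : {a | c → a ∈ S} = S := by ext a; simp [hc]
    rw [this]; exact hS
  · have : {a | c → a ∈ S} = Set.univ := by ext a; simp [hc]
    rw [this]; exact MeasurableSet.univ

lemma step2 {Ω : Type*} [MeasurableSpace Ω] (P : Measure Ω)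
    {L : ℕ} {n : Fin L → ℕ} (hn : ∀ l, 1 ≤ n l)
    (T : (l : Fin L) → Fin (n l) → Ω → ℝ) (hTmeas : ∀ l j, Measurable (T l j))
    (hexch : ∀ σ : (l : Fin L) → Equiv.Perm (Fin (n l)),
      Measure.map (fun ω (l : Fin L) (j : Fin (n l)) => T l (σ l j) ω) P
        = Measure.map (fun ω (l : Fin L) (j : Fin (n l)) => T l j ω) P)
    (i : Fin L) (t δ : ℝ)
    (x : (l : Fin L) → Fin (n l) → Bool) (r : Fin (n i))
    (m : (l : Fin L) → Fin ((if l = i then n i - 1 else n l) + 1))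
    (hxr : x i r = true)
    (hcnt : ∀ l, cntAux x l = (m l : ℕ) + if l = i then 1 else 0) :
    P (EvSet T i t δ x r) = P (ASet T i t δ m) := by
  classical
  have h0 : 0 < n i := hn i
  obtain ⟨σi, hP0, hσi2⟩ := exists_perm' (m i : ℕ) (univ.filter fun j => x i j = true)
    (by simpa [cntAux, if_pos rfl] using hcnt i) r (by simp [hxr]) h0
  have hso : ∀ l, ∃ σ : Equiv.Perm (Fin (n l)), ∀ j, x l (σ j) = true ↔ (j : ℕ) < cntAux x l :=
    fun l => by
      obtain ⟨σ, h⟩ := exists_perm (cntAux x l) (univ.filter fun j => x l j = true) rfl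
      exact ⟨σ, fun j => by simpa using h j⟩
  choose σ0 hσ0 using hso
  let σ : (l : Fin L) → Equiv.Perm (Fin (n l)) := Function.update σ0 i σi
  have hσieq : σ i = σi := Function.update_self i σi σ0
  have hσleq : ∀ l, l ≠ i → σ l = σ0 l := fun l h => Function.update_of_ne h σi σ0
  have Pi' : ∀ j : Fin (n i), x i (σ i j) = true ↔ (j : ℕ) < (m i : ℕ) + 1 := by
    intro j; rw [hσieq]; simpa using hσi2 j
  have Pl : ∀ l, l ≠ i → ∀ j : Fin (n l), x l (σ l j) = true ↔ (j : ℕ) < (m l : ℕ) := by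
    intro l hl j
    rw [hσleq l hl]
    have hc' : cntAux x l = (m l : ℕ) := by rw [hcnt l]; simp [hl]
    rw [← hc']
    exact hσ0 l j
  have P0 : σ i ⟨0, h0⟩ = r := by rw [hσieq]; exact hP0
  set B : Set ((l : Fin L) → Fin (n l) → ℝ) :=
    {a | (∀ l, l ≠ i → ∀ j : Fin (n l),
          ((j : ℕ) < (m l : ℕ) → t < a l j) ∧ ((m l : ℕ) ≤ (j : ℕ) → a l j ≤ t))
      ∧ (∀ j : Fin (n i),
          ((j : ℕ) = 0 → t < a i j ∧ a i j ≤ t + δ)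
          ∧ (1 ≤ (j : ℕ) ∧ (j : ℕ) ≤ (m i : ℕ) → t < a i j)
          ∧ ((m i : ℕ) + 1 ≤ (j : ℕ) → a i j ≤ t))} with hBdef
  have heval : ∀ (l : Fin L) (j : Fin (n l)),
      Measurable fun a : (l : Fin L) → Fin (n l) → ℝ => a l j :=
    fun l j => (measurable_pi_apply j).comp (measurable_pi_apply l)
  have hlt : ∀ (l : Fin L) (j : Fin (n l)), MeasurableSet {a : (l : Fin L) → Fin (n l) → ℝ | t < a l j} :=
    fun l j => measurableSet_lt measurable_const (heval l j)
  have hle : ∀ (l : Fin L) (j : Fin (n l)) (s : ℝ),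
      MeasurableSet {a : (l : Fin L) → Fin (n l) → ℝ | a l j ≤ s} :=
    fun l j s => measurableSet_le (heval l j) measurable_const
  have hBmeas : MeasurableSet B := by
    rw [hBdef]
    have e1 : {a : (l : Fin L) → Fin (n l) → ℝ | (∀ l, l ≠ i → ∀ j : Fin (n l),
          ((j : ℕ) < (m l : ℕ) → t < a l j) ∧ ((m l : ℕ) ≤ (j : ℕ) → a l j ≤ t))
      ∧ (∀ j : Fin (n i),
          ((j : ℕ) = 0 → t < a i j ∧ a i j ≤ t + δ)
          ∧ (1 ≤ (j : ℕ) ∧ (j : ℕ) ≤ (m i : ℕ) → t < a i j)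
          ∧ ((m i : ℕ) + 1 ≤ (j : ℕ) → a i j ≤ t))}
        = (⋂ l, ⋂ j : Fin (n l), ({a | l ≠ i → ((j : ℕ) < (m l : ℕ) → t < a l j)}
            ∩ {a | l ≠ i → ((m l : ℕ) ≤ (j : ℕ) → a l j ≤ t)}))
          ∩ (⋂ j : Fin (n i), ({a | (j : ℕ) = 0 → t < a i j}
            ∩ {a | (j : ℕ) = 0 → a i j ≤ t + δ}
            ∩ {a | 1 ≤ (j : ℕ) ∧ (j : ℕ) ≤ (m i : ℕ) → t < a i j}
            ∩ {a | (m i : ℕ) + 1 ≤ (j : ℕ) → a i j ≤ t})) := by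
      ext a
      simp only [Set.mem_setOf_eq, Set.mem_inter_iff, Set.mem_iInter]
      constructor
      · rintro ⟨h1, h2⟩
        exact ⟨fun l j => ⟨fun hl hj => (h1 l hl j).1 hj, fun hl hj => (h1 l hl j).2 hj⟩,
          fun j => ⟨⟨⟨fun hj => ((h2 j).1 hj).1, fun hj => ((h2 j).1 hj).2⟩,
            fun hj => (h2 j).2.1 hj⟩, fun hj => (h2 j).2.2 hj⟩⟩
      · rintro ⟨h1, h2⟩
        exact ⟨fun l hl j => ⟨fun hj => (h1 l j).1 hl hj, fun hj => (h1 l j).2 hl hj⟩,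
          fun j => ⟨fun hj => ⟨(h2 j).1.1.1 hj, (h2 j).1.1.2 hj⟩,
            fun hj => (h2 j).1.2 hj, fun hj => (h2 j).2 hj⟩⟩
    rw [e1]
    refine MeasurableSet.inter
      (MeasurableSet.iInter fun l => MeasurableSet.iInter fun j => MeasurableSet.inter ?_ ?_)
      (MeasurableSet.iInter fun j =>
        MeasurableSet.inter (MeasurableSet.inter (MeasurableSet.inter ?_ ?_) ?_) ?_)
    · exact measurableSet_imp _ _ (measurableSet_imp _ _ (hlt l j))
    · exact measurableSet_imp _ _ (measurableSet_imp _ _ (hle l j t))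
    · exact measurableSet_imp _ _ (hlt i j)
    · exact measurableSet_imp _ _ (hle i j (t + δ))
    · exact measurableSet_imp _ _ (hlt i j)
    · exact measurableSet_imp _ _ (hle i j t)
  have hFσ : Measurable (fun ω (l : Fin L) (j : Fin (n l)) => T l (σ l j) ω) :=
    measurable_pi_lambda _ fun l => measurable_pi_lambda _ fun j => hTmeas l (σ l j)
  have hFid : Measurable (fun ω (l : Fin L) (j : Fin (n l)) => T l j ω) :=
    measurable_pi_lambda _ fun l => measurable_pi_lambda _ fun j => hTmeas l j
  have hkey : P ((fun ω (l : Fin L) (j : Fin (n l)) => T l (σ l j) ω) ⁻¹' B)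
      = P ((fun ω (l : Fin L) (j : Fin (n l)) => T l j ω) ⁻¹' B) := by
    rw [← Measure.map_apply hFσ hBmeas, ← Measure.map_apply hFid hBmeas, hexch σ]
  have h2eq : (fun ω (l : Fin L) (j : Fin (n l)) => T l j ω) ⁻¹' B = ASet T i t δ m := rfl
  have h1eq : (fun ω (l : Fin L) (j : Fin (n l)) => T l (σ l j) ω) ⁻¹' B
      = EvSet T i t δ x r := by
    ext ω
    simp only [Set.mem_preimage, hBdef, Set.mem_setOf_eq, EvSet]
    constructor
    · rintro ⟨h1, h2⟩
      constructor
      · intro l j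
        rcases eq_or_ne l i with rfl | hl
        · set j' := (σ l).symm j with hj'def
          have hj : σ l j' = j := Equiv.apply_symm_apply _ _
          rcases Nat.lt_or_ge (j' : ℕ) ((m l : ℕ) + 1) with hltc | hgec
          · have hx : x l j = true := by rw [← hj]; exact (Pi' j').2 hltc
            have ht' : t < T l j ω := by
              rcases Nat.eq_zero_or_pos (j' : ℕ) with hz | hp
              · have := ((h2 j').1 hz).1; rwa [hj] at this
              · have := (h2 j').2.1 ⟨hp, by omega⟩; rwa [hj] at this
            simp [hx, ht']
          · have hx : x l j ≠ true := by
              rw [← hj]; intro hc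
              have := (Pi' j').1 hc; omega
            have hlet : T l j ω ≤ t := by
              have := (h2 j').2.2 (by omega); rwa [hj] at this
            simp [hx, not_lt.2 hlet]
        · set j' := (σ l).symm j with hj'def
          have hj : σ l j' = j := Equiv.apply_symm_apply _ _
          rcases Nat.lt_or_ge (j' : ℕ) (m l : ℕ) with hltc | hgec
          · have hx : x l j = true := by rw [← hj]; exact (Pl l hl j').2 hltc
            have ht' : t < T l j ω := by
              have := (h1 l hl j').1 hltc; rwa [hj] at this
            simp [hx, ht']
          · have hx : x l j ≠ true := by
              rw [← hj]; intro hc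
              have := (Pl l hl j').1 hc; omega
            have hlet : T l j ω ≤ t := by
              have := (h1 l hl j').2 hgec; rwa [hj] at this
            simp [hx, not_lt.2 hlet]
      · have := (h2 ⟨0, h0⟩).1 rfl
        rw [P0] at this; exact this.2
    · rintro ⟨hst, hrδ⟩
      constructor
      · intro l hl j
        constructor
        · intro hjm; exact (hst l (σ l j)).2 ((Pl l hl j).2 hjm)
        · intro hjm
          refine le_of_not_gt fun hltT => ?_
          have hx := (hst l (σ l j)).1 hltT
          have := (Pl l hl j).1 hx; omega
      · intro j
        refine ⟨?_, ?_, ?_⟩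
        · intro hj0
          have hj : j = ⟨0, h0⟩ := by
            apply Fin.ext; simpa using hj0
          rw [hj, P0]
          exact ⟨(hst i r).2 hxr, hrδ⟩
        · rintro ⟨ha, hb⟩
          exact (hst i (σ i j)).2 ((Pi' j).2 (by omega))
        · intro hj
          refine le_of_not_gt fun hltT => ?_
          have hx := (hst i (σ i j)).1 hltT
          have := (Pi' j).1 hx; omega
  rw [← h1eq, ← h2eq, hkey]

lemma choose_id (N k : ℕ) (h : 1 ≤ N) : N * (N - 1).choose k = (k + 1) * N.choose (k + 1) := by
  obtain ⟨N', rfl⟩ : ∃ N', N = N' + 1 := ⟨N - 1, by omega⟩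
  simp only [Nat.add_sub_cancel]
  have := Nat.add_one_mul_choose_eq N' k
  rw [this]
  ring

theorem stmt_3
    {Ω : Type*} [MeasurableSpace Ω] (P : Measure Ω) [IsProbabilityMeasure P]
    {L : ℕ} (hL : 1 ≤ L) (n : Fin L → ℕ) (hn : ∀ l, 1 ≤ n l)
    (T : (l : Fin L) → Fin (n l) → Ω → ℝ)
    (hTmeas : ∀ l j, Measurable (T l j))
    (hexch : ∀ σ : (l : Fin L) → Equiv.Perm (Fin (n l)),
      Measure.map (fun ω (l : Fin L) (j : Fin (n l)) => T l (σ l j) ω) P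
        = Measure.map (fun ω (l : Fin L) (j : Fin (n l)) => T l j ω) P)
    (φ : ((l : Fin L) → Fin (n l) → Bool) → Bool) (hφ : Monotone φ)
    (Tsys : Ω → ℝ) (hTsys : Measurable Tsys)
    (hT : ∀ t : ℝ, 0 ≤ t →
      {ω | t < Tsys ω} = {ω | φ (fun l j => decide (t < T l j ω)) = true})
    (i : Fin L) (t δ : ℝ) (ht : 0 ≤ t) (hδ : 0 < δ) :
    ∑ r : Fin (n i),
        (P {ω | t < Tsys ω ∧ t < T i r ω ∧ T i r ω ≤ t + δ}).toReal
    = (n i : ℝ) *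
      ∑ m : (l : Fin L) → Fin ((if l = i then n i - 1 else n l) + 1),
        survSig n φ (fun l => (m l : ℕ) + if l = i then 1 else 0)
          * (∏ l, (Nat.choose (if l = i then n i - 1 else n l) (m l) : ℝ))
          * (P {ω | (∀ l, l ≠ i → ∀ j : Fin (n l),
                ((j : ℕ) < (m l : ℕ) → t < T l j ω) ∧ ((m l : ℕ) ≤ (j : ℕ) → T l j ω ≤ t))
              ∧ (∀ j : Fin (n i),
                ((j : ℕ) = 0 → t < T i j ω ∧ T i j ω ≤ t + δ)
                ∧ (1 ≤ (j : ℕ) ∧ (j : ℕ) ≤ (m i : ℕ) → t < T i j ω)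
                ∧ ((m i : ℕ) + 1 ≤ (j : ℕ) → T i j ω ≤ t))}).toReal := by
  classical
  set A : ((l : Fin L) → Fin ((if l = i then n i - 1 else n l) + 1)) → ℝ :=
    fun m => (P (ASet T i t δ m)).toReal with hAdef
  -- Step A: each summand of the LHS
  have hA : ∀ r : Fin (n i),
      (P {ω | t < Tsys ω ∧ t < T i r ω ∧ T i r ω ≤ t + δ}).toReal
      = ∑ x : (l : Fin L) → Fin (n l) → Bool,
          (if φ x = true ∧ x i r = true then A (keyAux n i x) else 0) := by
    intro r
    have hne : ∀ x ∈ (Finset.univ : Finset ((l : Fin L) → Fin (n l) → Bool)),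
        (if φ x = true ∧ x i r = true then P (EvSet T i t δ x r) else 0) ≠ ⊤ := by
      intro x _
      split
      · exact measure_ne_top P _
      · exact ENNReal.zero_ne_top
    rw [step1 P T hTmeas φ Tsys t (hT t ht) i δ r, ENNReal.toReal_sum hne]
    refine Finset.sum_congr rfl fun x _ => ?_
    by_cases hc : φ x = true ∧ x i r = true
    · rw [if_pos hc, if_pos hc]
      have hpos : 1 ≤ cntAux x i := by
        apply Finset.card_pos.2
        exact ⟨r, by simp [hc.2]⟩
      rw [step2 P hn T hTmeas hexch i t δ x r (keyAux n i x) hc.2 ?_]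
      intro l
      by_cases hl : l = i
      · have hv : (keyAux n i x l : ℕ) = cntAux x i - 1 := by simp [keyAux, hl]
        simp only [hv, hl, if_true, eq_self_iff_true]
        omega
      · simp [keyAux, hl]
    · rw [if_neg hc, if_neg hc, ENNReal.toReal_zero]
  -- Step B: sum over r, swap and collapse
  have hB : ∑ r : Fin (n i),
        (P {ω | t < Tsys ω ∧ t < T i r ω ∧ T i r ω ≤ t + δ}).toReal
      = ∑ x : (l : Fin L) → Fin (n l) → Bool,
          (if φ x = true then (cntAux x i : ℝ) * A (keyAux n i x) else 0) := by
    calc ∑ r : Fin (n i), (P {ω | t < Tsys ω ∧ t < T i r ω ∧ T i r ω ≤ t + δ}).toReal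
        = ∑ r : Fin (n i), ∑ x : (l : Fin L) → Fin (n l) → Bool,
            (if φ x = true ∧ x i r = true then A (keyAux n i x) else 0) := by
          exact Finset.sum_congr rfl fun r _ => hA r
      _ = ∑ x : (l : Fin L) → Fin (n l) → Bool, ∑ r : Fin (n i),
            (if φ x = true ∧ x i r = true then A (keyAux n i x) else 0) := Finset.sum_comm
      _ = _ := by
          refine Finset.sum_congr rfl fun x _ => ?_
          by_cases hφx : φ x = true
          · simp only [hφx, true_and, if_true]
            rw [← Finset.sum_filter, Finset.sum_const, nsmul_eq_mul]
            rfl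
          · simp [hφx]
  rw [hB]
  -- Step C: group by the key
  have hC : ∑ x : (l : Fin L) → Fin (n l) → Bool,
        (if φ x = true then (cntAux x i : ℝ) * A (keyAux n i x) else 0)
      = ∑ m : (l : Fin L) → Fin ((if l = i then n i - 1 else n l) + 1),
          ∑ x ∈ Finset.univ.filter (fun x => keyAux n i x = m),
            (if φ x = true then (cntAux x i : ℝ) * A (keyAux n i x) else 0) := by
    rw [Finset.sum_fiberwise_eq_sum_filter]
    simp
  rw [hC, Finset.mul_sum]
  refine Finset.sum_congr rfl fun m _ => ?_
  -- per-`m` identification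
  have hinner : ∑ x ∈ Finset.univ.filter (fun x => keyAux n i x = m),
        (if φ x = true then (cntAux x i : ℝ) * A (keyAux n i x) else 0)
      = ∑ x : (l : Fin L) → Fin (n l) → Bool,
          (if (∀ l, (Finset.univ.filter fun j => x l j = true).card
                = (m l : ℕ) + if l = i then 1 else 0) ∧ φ x = true
           then ((m i : ℕ) + 1 : ℝ) * A m else 0) := by
    rw [Finset.sum_filter]
    refine Finset.sum_congr rfl fun x _ => ?_
    by_cases hφx : φ x = true
    · by_cases hz : cntAux x i = 0
      · have hcond : ¬ ((∀ l, (Finset.univ.filter fun j => x l j = true).card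
            = (m l : ℕ) + if l = i then 1 else 0) ∧ φ x = true) := by
          rintro ⟨hc, -⟩
          have h1 := hc i
          simp only [eq_self_iff_true, if_true] at h1
          have h2 : cntAux x i = (m i : ℕ) + 1 := h1
          omega
        rw [if_neg hcond]
        by_cases hk : keyAux n i x = m
        · rw [if_pos hk, if_pos hφx, hz]
          simp
        · rw [if_neg hk]
      · have hiff : (keyAux n i x = m) ↔
            (∀ l, (Finset.univ.filter fun j => x l j = true).card
              = (m l : ℕ) + if l = i then 1 else 0) := by
          constructor
          · intro hk l
            have hval : (keyAux n i x l : ℕ) = (m l : ℕ) := by rw [hk]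
            by_cases hl : l = i
            · have hv : (keyAux n i x l : ℕ) = cntAux x i - 1 := by simp [keyAux, hl]
              rw [hv] at hval
              have hle : 1 ≤ cntAux x i := by omega
              have hgoal : cntAux x l = (m l : ℕ) + 1 := by
                have hxx : cntAux x l = cntAux x i := by rw [hl]
                omega
              simpa [hl, cntAux] using hgoal
            · have hv : (keyAux n i x l : ℕ) = cntAux x l := by simp [keyAux, hl]
              rw [hv] at hval
              simpa [hl, cntAux] using hval
          · intro hc
            funext l
            apply Fin.ext
            by_cases hl : l = i
            · have hv : (keyAux n i x l : ℕ) = cntAux x i - 1 := by simp [keyAux, hl]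
              have h1 := hc l
              have h2 : cntAux x l = (m l : ℕ) + 1 := by simpa [hl, cntAux] using h1
              have h3 : cntAux x l = cntAux x i := by rw [hl]
              rw [hv]
              omega
            · have hv : (keyAux n i x l : ℕ) = cntAux x l := by simp [keyAux, hl]
              have h1 := hc l
              have h2 : cntAux x l = (m l : ℕ) := by simpa [hl, cntAux] using h1
              rw [hv]
              omega
        by_cases hk : keyAux n i x = m
        · rw [if_pos hk, if_pos hφx, hk, if_pos ⟨hiff.1 hk, hφx⟩]
          have hcnt : cntAux x i = (m i : ℕ) + 1 := by
            have h1 := (hiff.1 hk) i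
            simpa [cntAux] using h1
          rw [hcnt]
          push_cast
          ring
        · rw [if_neg hk, if_neg (fun hc => hk (hiff.2 hc.1))]
    · simp [hφx]
  rw [hinner]
  -- Step D: arithmetic with the survival signature
  have hS : ∑ x : (l : Fin L) → Fin (n l) → Bool,
        (if (∀ l, (Finset.univ.filter fun j => x l j = true).card
              = (m l : ℕ) + if l = i then 1 else 0) ∧ φ x = true
         then ((m i : ℕ) + 1 : ℝ) * A m else 0)
      = (((m i : ℕ) + 1 : ℝ) * A m) *
        ∑ x : (l : Fin L) → Fin (n l) → Bool,
          (if (∀ l, (Finset.univ.filter fun j => x l j = true).card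
                = (m l : ℕ) + if l = i then 1 else 0) ∧ φ x = true
           then (1 : ℝ) else 0) := by
    rw [Finset.mul_sum]
    refine Finset.sum_congr rfl fun x _ => ?_
    split <;> simp
  rw [hS]
  -- notation
  set S : ℝ := ∑ x : (l : Fin L) → Fin (n l) → Bool,
      (if (∀ l, (Finset.univ.filter fun j => x l j = true).card
            = (m l : ℕ) + if l = i then 1 else 0) ∧ φ x = true
       then (1 : ℝ) else 0) with hSdef
  have hsig : survSig n φ (fun l => (m l : ℕ) + if l = i then 1 else 0)
      = S / ∏ l, (Nat.choose (n l) ((m l : ℕ) + if l = i then 1 else 0) : ℝ) := rfl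
  have hDpos : ∀ l, 0 < Nat.choose (n l) ((m l : ℕ) + if l = i then 1 else 0) := by
    intro l
    apply Nat.choose_pos
    have hlt := (m l).isLt
    by_cases hl : l = i
    · simp only [hl, if_true, eq_self_iff_true] at hlt ⊢
      have := hn i
      omega
    · simp only [hl, if_false] at hlt ⊢
      omega
  have hnat : n i * ∏ l, Nat.choose (if l = i then n i - 1 else n l) (m l)
      = ((m i : ℕ) + 1) * ∏ l, Nat.choose (n l) ((m l : ℕ) + if l = i then 1 else 0) := by
    rw [← Finset.mul_prod_erase Finset.univ _ (Finset.mem_univ i),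
        ← Finset.mul_prod_erase Finset.univ
          (fun l => Nat.choose (n l) ((m l : ℕ) + if l = i then 1 else 0)) (Finset.mem_univ i)]
    have hrest : ∏ l ∈ Finset.univ.erase i, Nat.choose (if l = i then n i - 1 else n l) (m l)
        = ∏ l ∈ Finset.univ.erase i, Nat.choose (n l) ((m l : ℕ) + if l = i then 1 else 0) := by
      refine Finset.prod_congr rfl fun l hl => ?_
      have hl' : l ≠ i := Finset.ne_of_mem_erase hl
      simp [hl']
    rw [hrest, ← Nat.mul_assoc, ← Nat.mul_assoc]
    congr 1
    simp only [eq_self_iff_true, if_true]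
    exact choose_id (n i) (m i : ℕ) (hn i)
  have hD0 : (∏ l, (Nat.choose (n l) ((m l : ℕ) + if l = i then 1 else 0) : ℝ)) ≠ 0 := by
    apply ne_of_gt
    apply Finset.prod_pos
    intro l _
    exact_mod_cast hDpos l
  have hcast : (n i : ℝ) * ∏ l, (Nat.choose (if l = i then n i - 1 else n l) (m l) : ℝ)
      = ((m i : ℕ) + 1 : ℝ) * ∏ l, (Nat.choose (n l) ((m l : ℕ) + if l = i then 1 else 0) : ℝ) := by
    exact_mod_cast hnat
  have hfin : (((m i : ℕ) + 1 : ℝ) * A m) * S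
      = (n i : ℝ) * (survSig n φ (fun l => (m l : ℕ) + if l = i then 1 else 0)
          * (∏ l, (Nat.choose (if l = i then n i - 1 else n l) (m l) : ℝ)) * A m) := by
    rw [hsig]
    field_simp
    linear_combination -(A m * S) * hcast
  exact hfin
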